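/- Let m, λ, A₀ be real constants with m ≠ 0 and set A(t) = e^{A₀t}. On ℝ⁴ with coordinates (t,x,y,z), define the Bianchi III metric g = diag(−A(t)²e^{mλt}, A(t)²e^{mλt}, A(t)²e^{m(λ−1)t}, A(t)²e^{−2x}). Then the vector field X₃ = (2/m, 0, y, λz) is a homothetic Killing vector of g with constant conformal factor ψ = 2A₀/m + λ. -/

import Mathlib

noncomputable section

/-- Partial derivative of `f` in the `μ`-th coordinate direction at `p`. -/
def pd (μ : Fin 4) (f : (Fin 4 → ℝ) → ℝ) (p : Fin 4 → ℝ) : ℝ :=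
  fderiv ℝ f p (Pi.single μ 1)

/-- `ξ` is a conformal Killing vector of the metric `g` with conformal factor `ψ`. -/
def IsCKV (g : (Fin 4 → ℝ) → Matrix (Fin 4) (Fin 4) ℝ)
    (ξ : (Fin 4 → ℝ) → Fin 4 → ℝ) (ψ : (Fin 4 → ℝ) → ℝ) : Prop :=
  ∀ (μ ν : Fin 4) (p : Fin 4 → ℝ),
    (∑ l : Fin 4, (ξ p l * pd l (fun q => g q μ ν) p
      + g p l ν * pd μ (fun q => ξ q l) p
      + g p μ l * pd ν (fun q => ξ q l) p)) = 2 * ψ p * g p μ ν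

/-- `ξ` is a Killing vector of the metric `g`. -/
def IsKV (g : (Fin 4 → ℝ) → Matrix (Fin 4) (Fin 4) ℝ)
    (ξ : (Fin 4 → ℝ) → Fin 4 → ℝ) : Prop :=
  ∀ (μ ν : Fin 4) (p : Fin 4 → ℝ),
    (∑ l : Fin 4, (ξ p l * pd l (fun q => g q μ ν) p
      + g p l ν * pd μ (fun q => ξ q l) p
      + g p μ l * pd ν (fun q => ξ q l) p)) = 0

lemma pd_const (μ : Fin 4) (c : ℝ) (p : Fin 4 → ℝ) : pd μ (fun _ => c) p = 0 := by
  simp [pd]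

lemma pd_coord (μ i : Fin 4) (p : Fin 4 → ℝ) :
    pd μ (fun q => q i) p = ((Pi.single μ 1 : Fin 4 → ℝ) i) := by
  have h := hasFDerivAt_apply (𝕜 := ℝ) i p
  rw [pd, h.fderiv]; rfl

lemma pd_cmul (μ i : Fin 4) (c : ℝ) (p : Fin 4 → ℝ) :
    pd μ (fun q => c * q i) p = c * ((Pi.single μ 1 : Fin 4 → ℝ) i) := by
  have h := (hasFDerivAt_apply (𝕜 := ℝ) i p).const_mul c
  rw [pd, h.fderiv]; rfl

lemma pd_exp_lin (c a b : ℝ) (μ : Fin 4) (p : Fin 4 → ℝ) :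
    pd μ (fun q => c * Real.exp (a * q 0 + b * q 1)) p
      = c * Real.exp (a * p 0 + b * p 1)
          * (a * ((Pi.single μ 1 : Fin 4 → ℝ) 0) + b * ((Pi.single μ 1 : Fin 4 → ℝ) 1)) := by
  have h0 := ((hasFDerivAt_apply (𝕜 := ℝ) (0 : Fin 4) p).const_mul a).add
      ((hasFDerivAt_apply (𝕜 := ℝ) (1 : Fin 4) p).const_mul b)
  have h1 : HasFDerivAt (fun q : Fin 4 → ℝ => c * Real.exp (a * q 0 + b * q 1)) _ p :=
    (h0.exp).const_mul c
  rw [pd, h1.fderiv]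
  simp [ContinuousLinearMap.proj_apply]
  ring

lemma pd_neg (μ : Fin 4) (f : (Fin 4 → ℝ) → ℝ) (p : Fin 4 → ℝ) :
    pd μ (fun q => -(f q)) p = - pd μ f p := by
  simp [pd, fderiv_neg]

lemma pd_g (A₀ k : ℝ) (μ : Fin 4) (p : Fin 4 → ℝ) :
    pd μ (fun q => Real.exp (A₀ * q 0) ^ 2 * Real.exp (k * q 0)) p
      = (2 * A₀ + k) * ((Pi.single μ 1 : Fin 4 → ℝ) 0)
          * (Real.exp (A₀ * p 0) ^ 2 * Real.exp (k * p 0)) := by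
  have hf : (fun q : Fin 4 → ℝ => Real.exp (A₀ * q 0) ^ 2 * Real.exp (k * q 0))
      = fun q => 1 * Real.exp ((2 * A₀ + k) * q 0 + 0 * q 1) := by
    funext q
    rw [one_mul, sq, ← Real.exp_add, ← Real.exp_add]
    congr 1; ring
  rw [hf, pd_exp_lin]
  have h2 : (2 * A₀ + k) * p 0 + 0 * p 1 = A₀ * p 0 + (A₀ * p 0 + k * p 0) := by ring
  rw [h2, Real.exp_add, Real.exp_add, sq]; ring

lemma pd_g4 (A₀ : ℝ) (μ : Fin 4) (p : Fin 4 → ℝ) :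
    pd μ (fun q => Real.exp (A₀ * q 0) ^ 2 * Real.exp (-(2 * q 1))) p
      = (2 * A₀ * ((Pi.single μ 1 : Fin 4 → ℝ) 0)
          + (-2) * ((Pi.single μ 1 : Fin 4 → ℝ) 1))
          * (Real.exp (A₀ * p 0) ^ 2 * Real.exp (-(2 * p 1))) := by
  have hf : (fun q : Fin 4 → ℝ => Real.exp (A₀ * q 0) ^ 2 * Real.exp (-(2 * q 1)))
      = fun q => 1 * Real.exp (2 * A₀ * q 0 + (-2) * q 1) := by
    funext q
    rw [one_mul, sq, ← Real.exp_add, ← Real.exp_add]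
    congr 1; ring
  rw [hf, pd_exp_lin]
  have h2 : 2 * A₀ * p 0 + (-2) * p 1 = A₀ * p 0 + (A₀ * p 0 + -(2 * p 1)) := by ring
  rw [h2, Real.exp_add, Real.exp_add, sq]; ring

/-- with `A(t) = e^{A₀t}`, the vector field `X₃ = (2/m)∂_t + y∂_y + λz∂_z`
is a homothetic Killing vector of the Bianchi III metric with constant conformal factor
`ψ = 2A₀/m + λ`. -/
theorem bianchiIII_X3_is_HV (m lam A₀ : ℝ) (hm : m ≠ 0)
    (A : ℝ → ℝ) (hA : A = fun t => Real.exp (A₀ * t))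
    (g : (Fin 4 → ℝ) → Matrix (Fin 4) (Fin 4) ℝ)
    (hg : g = fun p => Matrix.diagonal
      ![-((A (p 0)) ^ 2 * Real.exp (m * lam * p 0)),
        (A (p 0)) ^ 2 * Real.exp (m * lam * p 0),
        (A (p 0)) ^ 2 * Real.exp (m * (lam - 1) * p 0),
        (A (p 0)) ^ 2 * Real.exp (-2 * p 1)])
    (ξ : (Fin 4 → ℝ) → Fin 4 → ℝ)
    (hξ : ξ = fun p => ![2 / m, 0, p 2, lam * p 3]) :
    IsCKV g ξ (fun _ => 2 * A₀ / m + lam) := by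
  subst hA hg hξ
  intro μ ν p
  fin_cases μ <;> fin_cases ν <;>
    simp [IsCKV, Fin.sum_univ_four, Matrix.diagonal_apply, pd_const, pd_coord,
      pd_cmul, pd_neg, pd_g, pd_g4, Pi.single_apply] <;>
    field_simp <;> ring
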